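/- Let G be a locally compact Hausdorff topological group with left Haar measure μ_G, let K be a compact subgroup equipped with its Haar probability measure μ_K, and let P be a closed subgroup with left Haar measure μ_P. Assume the measures are compatible in the sense that the pushforward of the product measure μ_P × μ_K under the multiplication map P × K → G, (p,k) ↦ pk, equals μ_G. Then for all continuous compactly supported functions f₁, f₂ : G → ℂ, all k₁, k₂ ∈ K, and all p ∈ P: (f₁ ⋆ f₂)(k₁ p k₂⁻¹) = ∫_K ∫_P f₁(k₁ q k⁻¹) f₂(k q⁻¹ p k₂⁻¹) dμ_P(q) dμ_K(k). (Equivalently, the map φ_P^G(f)(k₁,k₂,p) := f(k₁ p k₂⁻¹) is a homomorphism from the convolution algebra of G to the algebra C(K × K) ⊗ C_c(P) with product (h₁h₂)(k₁,k₂,p) = ∫_K ∫_P h₁(k₁,k,q) h₂(k,k₂,q⁻¹p) dμ_P(q) dμ_K(k).) -/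

import Mathlib

open MeasureTheory
open Pointwise

/-- Restricting the first factor of a product measure equals restricting the product to a
vertical strip; proved by hand to avoid s-finiteness assumptions on the first factor. -/
lemma prod_restrict_left_eq_restrict_prod {α β : Type*} [MeasurableSpace α] [MeasurableSpace β]
    (μ : Measure α) (ν : Measure β) [SFinite ν] {S : Set α} (hS : MeasurableSet S) :
    (μ.restrict S).prod ν = (μ.prod ν).restrict (S ×ˢ Set.univ) := by
  ext A hA
  have key : ∀ x, ν (Prod.mk x ⁻¹' (A ∩ S ×ˢ Set.univ)) =
      S.indicator (fun x => ν (Prod.mk x ⁻¹' A)) x := by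
    intro x
    by_cases hx : x ∈ S
    · have h : Prod.mk x ⁻¹' (A ∩ S ×ˢ Set.univ) = Prod.mk x ⁻¹' A := by
        ext y; simp [hx]
      rw [h, Set.indicator_of_mem hx]
    · have h : Prod.mk x ⁻¹' (A ∩ S ×ˢ Set.univ) = ∅ := by
        ext y; simp [hx]
      rw [h, Set.indicator_of_notMem hx]
      simp
  calc (μ.restrict S).prod ν A
      = ∫⁻ x in S, ν (Prod.mk x ⁻¹' A) ∂μ := Measure.prod_apply hA
    _ = ∫⁻ x, S.indicator (fun x => ν (Prod.mk x ⁻¹' A)) x ∂μ :=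
        (lintegral_indicator hS _).symm
    _ = ∫⁻ x, ν (Prod.mk x ⁻¹' (A ∩ S ×ˢ Set.univ)) ∂μ :=
        lintegral_congr fun x => (key x).symm
    _ = (μ.prod ν) (A ∩ S ×ˢ Set.univ) :=
        (Measure.prod_apply (hA.inter (hS.prod MeasurableSet.univ))).symm
    _ = (μ.prod ν).restrict (S ×ˢ Set.univ) A := (Measure.restrict_apply hA).symm

/-- Harish-Chandra's compatibility lemma: if the Haar measures of `G`, of a compact subgroup
`K` (normalized to be a probability measure) and of a closed subgroup `P` are compatible, in
the sense that the pushforward of `μP × μK` under `(p, k) ↦ p k` is `μG`, then for all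
continuous compactly supported `f₁ f₂ : G → ℂ` and all `k₁ k₂ ∈ K`, `p ∈ P`,
`(f₁ ⋆ f₂)(k₁ p k₂⁻¹) = ∫_K ∫_P f₁(k₁ q k⁻¹) f₂(k q⁻¹ p k₂⁻¹) dμP(q) dμK(k)`. -/
theorem convolution_eq_double_integral_of_compatible_haar
    (G : Type*) [Group G] [TopologicalSpace G] [IsTopologicalGroup G]
    [LocallyCompactSpace G] [T2Space G] [MeasurableSpace G] [BorelSpace G]
    (μG : Measure G) [μG.IsHaarMeasure]
    (K P : Subgroup G) (hK : IsCompact (K : Set G)) (hP : IsClosed (P : Set G))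
    (μK : Measure K) [μK.IsHaarMeasure] [IsProbabilityMeasure μK]
    (μP : Measure P) [μP.IsHaarMeasure]
    (hcompat : Measure.map (fun pk : P × K => (pk.1 : G) * (pk.2 : G)) (μP.prod μK) = μG)
    (f₁ f₂ : G → ℂ) (hf₁ : Continuous f₁) (hsupp₁ : HasCompactSupport f₁)
    (hf₂ : Continuous f₂) (hsupp₂ : HasCompactSupport f₂)
    (k₁ k₂ : K) (p : P) :
    (∫ h : G, f₁ h * f₂ (h⁻¹ * ((k₁ : G) * (p : G) * (k₂ : G)⁻¹)) ∂μG) =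
      ∫ k : K, ∫ q : P,
        f₁ ((k₁ : G) * (q : G) * (k : G)⁻¹) *
          f₂ ((k : G) * (q : G)⁻¹ * (p : G) * (k₂ : G)⁻¹) ∂μP ∂μK := by
  haveI : CompactSpace K := isCompact_iff_compactSpace.mp hK
  haveI : BorelSpace K := inferInstanceAs (BorelSpace (K : Set G))
  haveI : BorelSpace P := inferInstanceAs (BorelSpace (P : Set G))
  set g₀ : G := (k₁ : G) * (p : G) * (k₂ : G)⁻¹ with hg₀
  set φ : G → ℂ := fun h => f₁ h * f₂ (h⁻¹ * g₀) with hφdef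
  have hφc : Continuous φ := hf₁.mul (hf₂.comp (continuous_inv.mul continuous_const))
  have hφs : HasCompactSupport φ := hsupp₁.mul_right
  set ψ : G → ℂ := fun h => φ ((k₁ : G) * h) with hψdef
  have hψc : Continuous ψ := hφc.comp (continuous_const.mul continuous_id)
  have hψs : HasCompactSupport ψ := by
    have := hφs.comp_homeomorph (Homeomorph.mulLeft (k₁ : G))
    exact this
  set m : P × K → G := fun pk => (pk.1 : G) * (pk.2 : G) with hmdef
  set ν : Measure (P × K) := μP.prod μK with hνdef
  -- m is a.e. measurable, since otherwise the pushforward would be the zero measure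
  have hm : AEMeasurable m ν := by
    by_contra h
    rw [Measure.map_of_not_aemeasurable h] at hcompat
    have h1 : μG Set.univ ≠ 0 := isOpen_univ.measure_ne_zero μG Set.univ_nonempty
    rw [← hcompat] at h1
    simp at h1
  -- right-invariance and inv-invariance of the Haar probability measure on the compact group K
  haveI : μK.IsMulRightInvariant := by
    constructor
    intro g
    haveI : IsProbabilityMeasure (Measure.map (· * g) μK) :=
      Measure.isProbabilityMeasure_map (continuous_mul_right g).measurable.aemeasurable
    have h := Measure.isMulInvariant_eq_smul_of_compactSpace (Measure.map (· * g) μK) μK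
    have h2 := congrArg (fun m : Measure K => m Set.univ) h
    simp only [Measure.smul_apply, measure_univ, ENNReal.smul_def, smul_eq_mul, mul_one] at h2
    have hc : (Measure.map (· * g) μK).haarScalarFactor μK = 1 := by
      exact_mod_cast h2.symm
    rw [h, hc, one_smul]
  haveI : μK.IsInvInvariant := by
    constructor
    haveI : IsProbabilityMeasure μK.inv := by
      constructor
      rw [Measure.inv_apply]
      simp
    have h := Measure.isMulInvariant_eq_smul_of_compactSpace μK.inv μK
    have h2 := congrArg (fun m : Measure K => m Set.univ) h
    simp only [Measure.smul_apply, measure_univ, ENNReal.smul_def, smul_eq_mul, mul_one] at h2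
    have hc : μK.inv.haarScalarFactor μK = 1 := by
      exact_mod_cast h2.symm
    rw [h, hc, one_smul]
  -- measurability of ψ ∘ m
  have haeF : AEStronglyMeasurable (fun x => ψ (m x)) ν :=
    (hψc.measurable.comp_aemeasurable hm).aestronglyMeasurable
  obtain ⟨C, hC⟩ := hψc.bounded_above_of_compact_support hψs
  -- a compact set in P containing the q-support
  set S : Set P := Subtype.val ⁻¹' (tsupport ψ * (K : Set G)) with hSdef
  have hScompact : IsCompact S :=
    (hP.isClosedEmbedding_subtypeVal.isProperMap).isCompact_preimage (hψs.mul hK)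
  have hSmeas : MeasurableSet S := hScompact.isClosed.measurableSet
  have hsuppF : Function.support (fun x : P × K => ψ (m x)) ⊆ S ×ˢ Set.univ := by
    rintro ⟨q, k⟩ hx
    refine ⟨?_, Set.mem_univ _⟩
    have hmem : (q : G) * (k : G) ∈ tsupport ψ := subset_tsupport ψ hx
    have hq : (q : G) = ((q : G) * (k : G)) * ((k⁻¹ : K) : G) := by simp
    rw [Set.mem_preimage, hq]
    exact Set.mul_mem_mul hmem (k⁻¹).2
  -- the restricted measure and integrability
  haveI : IsFiniteMeasure (μP.restrict S) := by
    constructor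
    rw [Measure.restrict_apply_univ]
    exact hScompact.measure_lt_top
  set νS : Measure (P × K) := (μP.restrict S).prod μK with hνSdef
  have hre : νS = ν.restrict (S ×ˢ Set.univ) :=
    prod_restrict_left_eq_restrict_prod μP μK hSmeas
  have hFiS : Integrable (fun x => ψ (m x)) νS := by
    rw [hre]
    apply Measure.integrableOn_of_bounded (M := C)
    · rw [hνdef, Measure.prod_prod]
      simp only [measure_univ, mul_one]
      exact hScompact.measure_lt_top.ne
    · exact haeF
    · exact Filter.Eventually.of_forall fun x => hC _
  have hzero : ∀ x ∉ S ×ˢ Set.univ, ψ (m x) = 0 :=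
    fun x hx => of_not_not fun h => hx (hsuppF h)
  -- main computation
  calc
    (∫ h : G, f₁ h * f₂ (h⁻¹ * g₀) ∂μG) = ∫ h : G, ψ h ∂μG :=
      (integral_mul_left_eq_self φ (k₁ : G)).symm
    _ = ∫ x : P × K, ψ (m x) ∂ν := by
      rw [← hcompat]
      refine integral_map hm ?_
      rw [hcompat]
      exact hψc.aestronglyMeasurable
    _ = ∫ x in S ×ˢ Set.univ, ψ (m x) ∂ν :=
      (setIntegral_eq_integral_of_forall_compl_eq_zero hzero).symm
    _ = ∫ x : P × K, ψ (m x) ∂νS := by rw [hre]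
    _ = ∫ k : K, ∫ q : P, ψ (m (q, k)) ∂(μP.restrict S) ∂μK := integral_prod_symm _ hFiS
    _ = ∫ k : K, ∫ q : P, ψ (m (q, k⁻¹)) ∂(μP.restrict S) ∂μK :=
      (integral_inv_eq_self (fun k : K => ∫ q : P, ψ (m (q, k)) ∂(μP.restrict S)) μK).symm
    _ = ∫ k : K, ∫ q : P, ψ (m (q, k⁻¹)) ∂μP ∂μK := by
      refine integral_congr_ae (Filter.Eventually.of_forall fun k => ?_)
      exact setIntegral_eq_integral_of_forall_compl_eq_zero fun q hq =>
        of_not_not fun h => hq (hsuppF h).1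
    _ = ∫ k : K, ∫ q : P,
        f₁ ((k₁ : G) * (q : G) * (k : G)⁻¹) *
          f₂ ((k : G) * (q : G)⁻¹ * (p : G) * (k₂ : G)⁻¹) ∂μP ∂μK := by
      refine integral_congr_ae (Filter.Eventually.of_forall fun k => ?_)
      refine integral_congr_ae (Filter.Eventually.of_forall fun q => ?_)
      simp only [hψdef, hφdef, hmdef, hg₀]
      push_cast
      congr 1
      · congr 1; group
      · congr 1; group
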